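/- arXiv:1310.2312 — 2 statements merged into one kernel-verified Lean document; each statement's English description precedes it below -/
import Mathlib

section
/- Assume balayage is possible for (E, Λ), where E ⊆ ℝ^d is closed and Λ ⊆ ℝ̂^d is compact. Then there exists K > 0 such that for every bounded Radon measure μ on ℝ^d, the infimum of ‖ν‖₁ over all bounded Radon measures ν supported in E with ν̂ = μ̂ on Λ is at most K‖μ‖₁. -/
open MeasureTheory Complex Filter Topology FourierTransform RealInnerProductSpace ENNReal NNReal

noncomputable section

abbrev Rd (d : ℕ) := EuclideanSpace ℝ (Fin d)

/-- The character `x ↦ e^{-2πi x·γ}`. -/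
def negChar {d : ℕ} (x γ : Rd d) : ℂ := Complex.exp (-(2 * Real.pi * Complex.I) * (⟪x, γ⟫ : ℝ))

/-- The character `x ↦ e^{2πi x·γ}`. -/
def posChar {d : ℕ} (x γ : Rd d) : ℂ := Complex.exp ((2 * Real.pi * Complex.I) * (⟪x, γ⟫ : ℝ))

/-- Integration of a (complex-valued) function against a complex measure,
via the Jordan decompositions of its real and imaginary parts. -/
def mInt {d : ℕ} (μ : ComplexMeasure (Rd d)) (f : Rd d → ℂ) : ℂ :=
  ((∫ x, f x ∂(ComplexMeasure.re μ).toJordanDecomposition.posPart) -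
    (∫ x, f x ∂(ComplexMeasure.re μ).toJordanDecomposition.negPart)) +
  Complex.I * ((∫ x, f x ∂(ComplexMeasure.im μ).toJordanDecomposition.posPart) -
    (∫ x, f x ∂(ComplexMeasure.im μ).toJordanDecomposition.negPart))

/-- Fourier transform `μ̂(γ) = ∫ e^{-2πi x·γ} dμ(x)` of a bounded complex measure. -/
def mFourier {d : ℕ} (μ : ComplexMeasure (Rd d)) (γ : Rd d) : ℂ := mInt μ fun x => negChar x γ

/-- Inverse Fourier transform `μ̌(x) = ∫ e^{2πi x·γ} dμ(γ)`. -/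
def mInvFourier {d : ℕ} (μ : ComplexMeasure (Rd d)) (x : Rd d) : ℂ := mInt μ fun γ => posChar x γ

/-- Total variation norm (up to equivalence) of a complex measure. -/
def tvNorm {d : ℕ} (μ : ComplexMeasure (Rd d)) : ℝ :=
  (((ComplexMeasure.re μ).totalVariation Set.univ) +
    ((ComplexMeasure.im μ).totalVariation Set.univ)).toReal

/-- A complex measure is supported in the set `E`. -/
def suppIn {d : ℕ} (μ : ComplexMeasure (Rd d)) (E : Set (Rd d)) : Prop :=
  ∀ s : Set (Rd d), MeasurableSet s → s ∩ E = ∅ → μ s = 0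

/-- Balayage is possible for `(E, Λ)`. -/
def BalayagePossible {d : ℕ} (E Λ : Set (Rd d)) : Prop :=
  ∀ μ : ComplexMeasure (Rd d), ∃ ν : ComplexMeasure (Rd d),
    suppIn ν E ∧ ∀ γ ∈ Λ, mFourier ν γ = mFourier μ γ

/-- `f` has its distributional spectrum (support of `f̂`) contained in `Λ`. -/
def SpectrumIn {d : ℕ} (f : Rd d → ℂ) (Λ : Set (Rd d)) : Prop :=
  ∀ φ : SchwartzMap (Rd d) ℂ, tsupport ⇑φ ⊆ Λᶜ → ∫ x, f x * 𝓕 (⇑φ) x = 0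

/-- Membership in `C(Λ)`: bounded continuous with spectrum in `Λ`. -/
def MemCLam {d : ℕ} (f : Rd d → ℂ) (Λ : Set (Rd d)) : Prop :=
  Continuous f ∧ (∃ M : ℝ, ∀ x, ‖f x‖ ≤ M) ∧ SpectrumIn f Λ

/-- `Λ` is a set of spectral synthesis. -/
def IsSSet {d : ℕ} (Λ : Set (Rd d)) : Prop :=
  ∀ f : Rd d → ℂ, MemCLam f Λ →
    ∀ μ : ComplexMeasure (Rd d), (∀ γ ∈ Λ, mFourier μ γ = 0) → mInt μ f = 0

/-- `Λ` is a set of strict multiplicity. -/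
def StrictMultiplicity {d : ℕ} (Λ : Set (Rd d)) : Prop :=
  ∃ μ : ComplexMeasure (Rd d), μ ≠ 0 ∧ suppIn μ Λ ∧
    Tendsto (fun x => ‖mInvFourier μ x‖) (Filter.cocompact (Rd d)) (nhds 0)

/-- The balayage constant `K(E,Λ)` (as an extended nonnegative real). -/
def Kconst {d : ℕ} (E Λ : Set (Rd d)) : ℝ≥0∞ :=
  sInf {K : ℝ≥0∞ | ∀ μ : ComplexMeasure (Rd d),
    (⨅ ν : {ν : ComplexMeasure (Rd d) // suppIn ν E ∧ ∀ γ ∈ Λ, mFourier ν γ = mFourier μ γ},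
      ENNReal.ofReal (tvNorm ν.1)) ≤ K * ENNReal.ofReal (tvNorm μ)}

/-- The comparison constant `J(E,Λ)` (as an extended nonnegative real). -/
def Jconst {d : ℕ} (E Λ : Set (Rd d)) : ℝ≥0∞ :=
  sInf {J : ℝ≥0∞ | ∀ f : Rd d → ℂ, MemCLam f Λ →
    (⨆ x : Rd d, (‖f x‖₊ : ℝ≥0∞)) ≤ J * ⨆ x : E, (‖f (x : Rd d)‖₊ : ℝ≥0∞)}

/-- `E` is separated. -/
def Separated {d : ℕ} (E : Set (Rd d)) : Prop :=
  ∃ r > 0, ∀ x ∈ E, ∀ y ∈ E, x ≠ y → r ≤ dist x y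

/-- The short-time Fourier transform `V_g f(x, ω)`. -/
def STFT {d : ℕ} (g f : Rd d → ℂ) (x ω : Rd d) : ℂ :=
  ∫ t, f t * (starRingEnd ℂ) (g (t - x)) * negChar t ω

end

noncomputable section AuxBal
namespace Bal

open MeasureTheory

variable {α : Type*} [MeasurableSpace α]

/-- Total variation norm of a signed measure. -/
def tv (s : SignedMeasure α) : ℝ := (s.totalVariation Set.univ).toReal

lemma tv_eq (s : SignedMeasure α) :
    tv s = (s.toJordanDecomposition.posPart Set.univ).toReal +
      (s.toJordanDecomposition.negPart Set.univ).toReal := by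
  rw [tv, SignedMeasure.totalVariation, Measure.add_apply,
    ENNReal.toReal_add (measure_ne_top _ _) (measure_ne_top _ _)]

lemma tv_nonneg (s : SignedMeasure α) : 0 ≤ tv s := ENNReal.toReal_nonneg

lemma apply_eq (s : SignedMeasure α) {A : Set α} (hA : MeasurableSet A) :
    s A = (s.toJordanDecomposition.posPart A).toReal -
      (s.toJordanDecomposition.negPart A).toReal := by
  conv_lhs => rw [← s.toSignedMeasure_toJordanDecomposition]
  rw [JordanDecomposition.toSignedMeasure, VectorMeasure.sub_apply,
    Measure.toSignedMeasure_apply_measurable hA, Measure.toSignedMeasure_apply_measurable hA]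
  rfl

lemma abs_apply_le (s : SignedMeasure α) {A : Set α} (hA : MeasurableSet A) :
    |s A| ≤ tv s := by
  rw [apply_eq s hA, tv_eq]
  have h1 : (s.toJordanDecomposition.posPart A).toReal ≤
      (s.toJordanDecomposition.posPart Set.univ).toReal :=
    ENNReal.toReal_mono (measure_ne_top _ _) (measure_mono (Set.subset_univ _))
  have h2 : (s.toJordanDecomposition.negPart A).toReal ≤
      (s.toJordanDecomposition.negPart Set.univ).toReal :=
    ENNReal.toReal_mono (measure_ne_top _ _) (measure_mono (Set.subset_univ _))
  have h3 : (0:ℝ) ≤ (s.toJordanDecomposition.posPart A).toReal := ENNReal.toReal_nonneg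
  have h4 : (0:ℝ) ≤ (s.toJordanDecomposition.negPart A).toReal := ENNReal.toReal_nonneg
  rw [abs_sub_le_iff]
  constructor <;> linarith

lemma apply_sub_compl_le (s : SignedMeasure α) {P : Set α} (hP : MeasurableSet P) :
    s P - s Pᶜ ≤ tv s := by
  rw [apply_eq s hP, apply_eq s hP.compl, tv_eq]
  have h1 : (s.toJordanDecomposition.posPart P).toReal +
      (s.toJordanDecomposition.posPart Pᶜ).toReal =
      (s.toJordanDecomposition.posPart Set.univ).toReal := by
    rw [← ENNReal.toReal_add (measure_ne_top _ _) (measure_ne_top _ _),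
      measure_add_measure_compl hP]
  have h2 : (s.toJordanDecomposition.negPart P).toReal +
      (s.toJordanDecomposition.negPart Pᶜ).toReal =
      (s.toJordanDecomposition.negPart Set.univ).toReal := by
    rw [← ENNReal.toReal_add (measure_ne_top _ _) (measure_ne_top _ _),
      measure_add_measure_compl hP]
  have h3 : (0:ℝ) ≤ (s.toJordanDecomposition.negPart P).toReal := ENNReal.toReal_nonneg
  have h4 : (0:ℝ) ≤ (s.toJordanDecomposition.posPart Pᶜ).toReal := ENNReal.toReal_nonneg
  linarith

lemma exists_tv_eq (s : SignedMeasure α) : ∃ P, MeasurableSet P ∧ tv s = s P - s Pᶜ := by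
  obtain ⟨i, hi₁, hi₂, hi₃, hpos, hneg⟩ := s.toJordanDecomposition_spec
  refine ⟨i, hi₁, ?_⟩
  rw [tv_eq, hpos, hneg,
    SignedMeasure.toMeasureOfZeroLE_apply _ hi₂ hi₁ MeasurableSet.univ,
    SignedMeasure.toMeasureOfLEZero_apply _ hi₃ hi₁.compl MeasurableSet.univ]
  simp [Set.inter_univ]
  ring

lemma tv_neg (s : SignedMeasure α) : tv (-s) = tv s := by
  rw [tv, tv, SignedMeasure.totalVariation_neg]

lemma tv_zero : tv (0 : SignedMeasure α) = 0 := by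
  rw [tv, SignedMeasure.totalVariation_zero]; simp

lemma tv_add_le (s t : SignedMeasure α) : tv (s + t) ≤ tv s + tv t := by
  obtain ⟨P, hP, hPeq⟩ := exists_tv_eq (s + t)
  rw [hPeq, VectorMeasure.add_apply, VectorMeasure.add_apply]
  have := apply_sub_compl_le s hP
  have := apply_sub_compl_le t hP
  linarith

lemma tv_smul_le (c : ℝ) (s : SignedMeasure α) : tv (c • s) ≤ |c| * tv s := by
  obtain ⟨P, hP, hPeq⟩ := exists_tv_eq (c • s)
  rw [hPeq, VectorMeasure.smul_apply, VectorMeasure.smul_apply, smul_eq_mul, smul_eq_mul,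
    ← mul_sub]
  rcases le_or_gt 0 c with hc | hc
  · rw [_root_.abs_of_nonneg hc]
    exact mul_le_mul_of_nonneg_left (apply_sub_compl_le s hP) hc
  · rw [_root_.abs_of_neg hc]
    have h := apply_sub_compl_le s hP.compl
    rw [compl_compl] at h
    nlinarith

lemma eq_zero_of_tv_eq_zero {s : SignedMeasure α} (h : tv s = 0) : s = 0 := by
  ext A hA
  have := abs_apply_le s hA
  rw [h] at this
  simpa [VectorMeasure.zero_apply] using abs_eq_zero.1 (le_antisymm this (abs_nonneg _))

end Bal
end AuxBal

noncomputable section AuxBal2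
namespace Bal

open MeasureTheory

variable {α : Type*} [MeasurableSpace α]

/-- Total variation norm of a complex measure. -/
def cnorm (μ : ComplexMeasure α) : ℝ := tv (ComplexMeasure.re μ) + tv (ComplexMeasure.im μ)

lemma cnorm_nonneg (μ : ComplexMeasure α) : 0 ≤ cnorm μ :=
  add_nonneg (tv_nonneg _) (tv_nonneg _)

lemma re_apply (μ : ComplexMeasure α) (A : Set α) :
    ComplexMeasure.re μ A = (μ A).re := rfl

lemma im_apply (μ : ComplexMeasure α) (A : Set α) :
    ComplexMeasure.im μ A = (μ A).im := rfl

lemma norm_apply_le (μ : ComplexMeasure α) {A : Set α} (hA : MeasurableSet A) :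
    ‖μ A‖ ≤ cnorm μ := by
  have h1 := abs_apply_le (ComplexMeasure.re μ) hA
  have h2 := abs_apply_le (ComplexMeasure.im μ) hA
  have h3 : ‖μ A‖ ≤ |(μ A).re| + |(μ A).im| := by
    exact Complex.norm_le_abs_re_add_abs_im _
  rw [← re_apply] at h3
  rw [← im_apply] at h3
  rw [cnorm]
  linarith

lemma cnorm_eq_zero {μ : ComplexMeasure α} (h : cnorm μ = 0) : μ = 0 := by
  ext A hA
  have := norm_apply_le μ hA
  rw [h] at this
  simpa [VectorMeasure.zero_apply] using norm_eq_zero.1 (le_antisymm this (norm_nonneg _))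

instance : NormedAddCommGroup (ComplexMeasure α) :=
  AddGroupNorm.toNormedAddCommGroup
    { toFun := cnorm
      map_zero' := by
        simp only [cnorm, map_zero, tv_zero, add_zero]
      add_le' := fun μ ν => by
        simp only [cnorm, map_add]
        have := tv_add_le (ComplexMeasure.re μ) (ComplexMeasure.re ν)
        have := tv_add_le (ComplexMeasure.im μ) (ComplexMeasure.im ν)
        linarith
      neg' := fun μ => by
        have hre : ComplexMeasure.re (-μ) = -ComplexMeasure.re μ := map_neg _ _
        have him : ComplexMeasure.im (-μ) = -ComplexMeasure.im μ := map_neg _ _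
        simp only [cnorm, hre, him, tv_neg]
      eq_zero_of_map_eq_zero' := fun μ h => cnorm_eq_zero h }

lemma norm_def (μ : ComplexMeasure α) : ‖μ‖ = cnorm μ := rfl

instance : NormedSpace ℝ (ComplexMeasure α) where
  norm_smul_le c μ := by
    rw [norm_def, norm_def, Real.norm_eq_abs]
    have hre : ComplexMeasure.re (c • μ) = c • ComplexMeasure.re μ := map_smul _ _ _
    have him : ComplexMeasure.im (c • μ) = c • ComplexMeasure.im μ := map_smul _ _ _
    simp only [cnorm, hre, him]
    have := tv_smul_le c (ComplexMeasure.re μ)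
    have := tv_smul_le c (ComplexMeasure.im μ)
    linarith [abs_nonneg c]

lemma norm_apply_le' (μ : ComplexMeasure α) {A : Set α} (hA : MeasurableSet A) :
    ‖μ A‖ ≤ ‖μ‖ := norm_apply_le μ hA

/-- Finite additivity of a vector measure over a finset. -/
lemma vm_finset_sum {M : Type*} [AddCommGroup M] [TopologicalSpace M] [T2Space M]
    [ContinuousAdd M] (v : VectorMeasure α M) {f : ℕ → Set α}
    (hf : ∀ i, MeasurableSet (f i)) (hd : Pairwise (Function.onFun Disjoint f)) (F : Finset ℕ) :
    v (⋃ i ∈ F, f i) = ∑ i ∈ F, v (f i) := by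
  classical
  induction F using Finset.induction with
  | empty => simp [VectorMeasure.empty]
  | @insert a F ha ih =>
    rw [Finset.set_biUnion_insert, Finset.sum_insert ha, ← ih,
      VectorMeasure.of_union ?hdisj (hf a)
        (F.measurableSet_biUnion (fun i _ => hf i))]
    case hdisj =>
      refine Set.disjoint_iUnion₂_right.2 fun i hi => hd fun h => ha ?_
      rw [h]; exact hi

instance : CompleteSpace (ComplexMeasure α) := by
  apply Metric.complete_of_cauchySeq_tendsto
  intro u hu
  have hcau : ∀ s : Set α, CauchySeq fun n => u n s := by
    intro s
    by_cases hs : MeasurableSet s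
    · rw [Metric.cauchySeq_iff]
      intro ε hε
      obtain ⟨N, hN⟩ := Metric.cauchySeq_iff.1 hu ε hε
      refine ⟨N, fun m hm n hn => ?_⟩
      have h1 : dist (u m s) (u n s) = ‖(u m - u n) s‖ := by
        rw [dist_eq_norm, VectorMeasure.sub_apply]
      rw [h1]
      calc ‖(u m - u n) s‖ ≤ ‖u m - u n‖ := norm_apply_le' _ hs
        _ = dist (u m) (u n) := (dist_eq_norm _ _).symm
        _ < ε := hN m hm n hn
    · have : (fun n => u n s) = fun _ => 0 := by
        funext n; exact (u n).not_measurable hs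
      rw [this]; exact cauchySeq_const 0
  have hglim : ∀ s : Set α, ∃ z, Filter.Tendsto (fun n => u n s) Filter.atTop (nhds z) :=
    fun s => cauchySeq_tendsto_of_complete (hcau s)
  choose g hglim using hglim
  have unif : ∀ ε > (0:ℝ), ∃ N, ∀ n ≥ N, ∀ s : Set α, MeasurableSet s →
      ‖u n s - g s‖ ≤ ε := by
    intro ε hε
    obtain ⟨N, hN⟩ := Metric.cauchySeq_iff.1 hu ε hε
    refine ⟨N, fun n hn s hs => ?_⟩
    have htd : Filter.Tendsto (fun m => ‖u n s - u m s‖) Filter.atTop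
        (nhds ‖u n s - g s‖) := (tendsto_const_nhds.sub (hglim s)).norm
    refine le_of_tendsto htd (Filter.eventually_atTop.2 ⟨N, fun m hm => ?_⟩)
    calc ‖u n s - u m s‖ = ‖(u n - u m) s‖ := by rw [VectorMeasure.sub_apply]
      _ ≤ ‖u n - u m‖ := norm_apply_le' _ hs
      _ = dist (u n) (u m) := (dist_eq_norm _ _).symm
      _ ≤ ε := (hN n hn m hm).le
  set ν : ComplexMeasure α :=
    { measureOf' := g
      empty' := by
        refine tendsto_nhds_unique (hglim ∅) ?_
        have : (fun n => u n (∅ : Set α)) = fun _ => 0 := by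
          funext n; exact (u n).empty
        rw [this]; exact tendsto_const_nhds
      not_measurable' := fun s hs => by
        refine tendsto_nhds_unique (hglim s) ?_
        have : (fun n => u n s) = fun _ => 0 := by
          funext n; exact (u n).not_measurable hs
        rw [this]; exact tendsto_const_nhds
      m_iUnion' := by
        intro f hf hdisj
        show Filter.Tendsto (fun F : Finset ℕ => ∑ i ∈ F, g (f i)) Filter.atTop
          (nhds (g (⋃ i, f i)))
        rw [Metric.tendsto_atTop]
        intro ε hε
        obtain ⟨N, hN⟩ := unif (ε/4) (by positivity)
        have hsum : Filter.Tendsto (fun F : Finset ℕ => ∑ i ∈ F, u N (f i)) Filter.atTop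
            (nhds (u N (⋃ i, f i))) := (u N).m_iUnion hf hdisj
        obtain ⟨F₀, hF₀⟩ := Metric.tendsto_atTop.1 hsum (ε/4) (by positivity)
        refine ⟨F₀, fun F hF => ?_⟩
        have hFmeas : MeasurableSet (⋃ i ∈ F, f i) :=
          F.measurableSet_biUnion (fun i _ => hf i)
        have hgF : ∑ i ∈ F, g (f i) = g (⋃ i ∈ F, f i) := by
          refine tendsto_nhds_unique
            (tendsto_finset_sum F fun i _ => hglim (f i)) ?_
          exact (hglim (⋃ i ∈ F, f i)).congr fun n => (vm_finset_sum (u n) hf hdisj F)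
        rw [hgF]
        calc dist (g (⋃ i ∈ F, f i)) (g (⋃ i, f i))
            ≤ dist (g (⋃ i ∈ F, f i)) (u N (⋃ i ∈ F, f i)) +
              dist (u N (⋃ i ∈ F, f i)) (u N (⋃ i, f i)) +
              dist (u N (⋃ i, f i)) (g (⋃ i, f i)) := dist_triangle4 _ _ _ _
          _ < ε := by
              have e1 : dist (g (⋃ i ∈ F, f i)) (u N (⋃ i ∈ F, f i)) ≤ ε/4 := by
                rw [dist_eq_norm, norm_sub_rev]; exact hN N le_rfl _ hFmeas
              have e2 : dist (u N (⋃ i ∈ F, f i)) (u N (⋃ i, f i)) < ε/4 := by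
                have := hF₀ F hF
                rwa [← vm_finset_sum (u N) hf hdisj F] at this
              have e3 : dist (u N (⋃ i, f i)) (g (⋃ i, f i)) ≤ ε/4 := by
                rw [dist_eq_norm]
                exact hN N le_rfl _ (MeasurableSet.iUnion hf)
              linarith }
  refine ⟨ν, Metric.tendsto_atTop.2 fun ε hε => ?_⟩
  obtain ⟨N, hN⟩ := unif (ε/8) (by positivity)
  refine ⟨N, fun n hn => ?_⟩
  have hν : ∀ s : Set α, MeasurableSet s → ‖(u n - ν) s‖ ≤ ε/8 := by
    intro s hs
    rw [VectorMeasure.sub_apply]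
    exact hN n hn s hs
  have hre : tv (ComplexMeasure.re (u n - ν)) ≤ ε/4 := by
    obtain ⟨P, hP, hPeq⟩ := exists_tv_eq (ComplexMeasure.re (u n - ν))
    rw [hPeq, re_apply, re_apply]
    have e1 : |((u n - ν) P).re| ≤ ε/8 :=
      le_trans (Complex.abs_re_le_norm _) (hν P hP)
    have e2 : |((u n - ν) Pᶜ).re| ≤ ε/8 :=
      le_trans (Complex.abs_re_le_norm _) (hν Pᶜ hP.compl)
    have := abs_le.1 e1
    have := abs_le.1 e2
    linarith
  have him : tv (ComplexMeasure.im (u n - ν)) ≤ ε/4 := by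
    obtain ⟨P, hP, hPeq⟩ := exists_tv_eq (ComplexMeasure.im (u n - ν))
    rw [hPeq, im_apply, im_apply]
    have e1 : |((u n - ν) P).im| ≤ ε/8 :=
      le_trans (Complex.abs_im_le_norm _) (hν P hP)
    have e2 : |((u n - ν) Pᶜ).im| ≤ ε/8 :=
      le_trans (Complex.abs_im_le_norm _) (hν Pᶜ hP.compl)
    have := abs_le.1 e1
    have := abs_le.1 e2
    linarith
  calc dist (u n) ν = cnorm (u n - ν) := by rw [dist_eq_norm, norm_def]
    _ ≤ ε/2 := by rw [cnorm]; linarith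
    _ < ε := by linarith

end Bal
end AuxBal2

noncomputable section AuxBal3
namespace Bal

open MeasureTheory

variable {α : Type*} [MeasurableSpace α]

/-- Integral of `f` against a signed measure via Jordan decomposition. -/
def sInt (s : SignedMeasure α) (f : α → ℂ) : ℂ :=
  (∫ x, f x ∂s.toJordanDecomposition.posPart) - ∫ x, f x ∂s.toJordanDecomposition.negPart

lemma sInt_eq (s : SignedMeasure α) (p n : Measure α) [IsFiniteMeasure p] [IsFiniteMeasure n]
    (h : ∀ A : Set α, MeasurableSet A → s A = (p A).toReal - (n A).toReal)
    {f : α → ℂ} (hf : ∀ μ : Measure α, IsFiniteMeasure μ → Integrable f μ) :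
    sInt s f = (∫ x, f x ∂p) - ∫ x, f x ∂n := by
  have hmeq : s.toJordanDecomposition.posPart + n = p + s.toJordanDecomposition.negPart := by
    ext A hA
    have h1 := apply_eq s hA
    have h2 := h A hA
    have e : ((s.toJordanDecomposition.posPart + n) A).toReal =
        ((p + s.toJordanDecomposition.negPart) A).toReal := by
      rw [Measure.add_apply, Measure.add_apply,
        ENNReal.toReal_add (measure_ne_top _ _) (measure_ne_top _ _),
        ENNReal.toReal_add (measure_ne_top _ _) (measure_ne_top _ _)]
      linarith
    exact (ENNReal.toReal_eq_toReal_iff' (measure_ne_top _ _) (measure_ne_top _ _)).1 e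
  have hint := congrArg (fun μ : Measure α => ∫ x, f x ∂μ) hmeq
  rw [integral_add_measure (hf _ inferInstance) (hf _ inferInstance),
    integral_add_measure (hf _ inferInstance) (hf _ inferInstance)] at hint
  rw [sInt]
  linear_combination hint

lemma sInt_add (s t : SignedMeasure α) {f : α → ℂ}
    (hf : ∀ μ : Measure α, IsFiniteMeasure μ → Integrable f μ) :
    sInt (s + t) f = sInt s f + sInt t f := by
  rw [sInt_eq (s + t) (s.toJordanDecomposition.posPart + t.toJordanDecomposition.posPart)
      (s.toJordanDecomposition.negPart + t.toJordanDecomposition.negPart) ?_ hf]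
  · rw [integral_add_measure (hf _ inferInstance) (hf _ inferInstance),
      integral_add_measure (hf _ inferInstance) (hf _ inferInstance), sInt, sInt]
    ring
  · intro A hA
    rw [VectorMeasure.add_apply, apply_eq s hA, apply_eq t hA, Measure.add_apply,
      Measure.add_apply, ENNReal.toReal_add (measure_ne_top _ _) (measure_ne_top _ _),
      ENNReal.toReal_add (measure_ne_top _ _) (measure_ne_top _ _)]
    ring

lemma toReal_nnreal_smul (r : ℝ≥0) (x : ℝ≥0∞) (_hx : x ≠ ⊤) :
    ((r • x).toReal) = (r : ℝ) * x.toReal := by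
  rw [ENNReal.smul_def, smul_eq_mul, ENNReal.toReal_mul, ENNReal.coe_toReal]

lemma sInt_smul (c : ℝ) (s : SignedMeasure α) {f : α → ℂ}
    (hf : ∀ μ : Measure α, IsFiniteMeasure μ → Integrable f μ) :
    sInt (c • s) f = (c : ℂ) * sInt s f := by
  rcases le_or_gt 0 c with hc | hc
  · rw [sInt_eq (c • s) (c.toNNReal • s.toJordanDecomposition.posPart)
        (c.toNNReal • s.toJordanDecomposition.negPart) ?_ hf]
    · rw [integral_smul_nnreal_measure, integral_smul_nnreal_measure, sInt,
        NNReal.smul_def, NNReal.smul_def, Real.coe_toNNReal c hc, Complex.real_smul,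
        Complex.real_smul]
      ring
    · intro A hA
      rw [VectorMeasure.smul_apply, apply_eq s hA, Measure.smul_apply, Measure.smul_apply,
        toReal_nnreal_smul _ _ (measure_ne_top _ _), toReal_nnreal_smul _ _ (measure_ne_top _ _),
        Real.coe_toNNReal c hc, smul_eq_mul]
      ring
  · rw [sInt_eq (c • s) ((-c).toNNReal • s.toJordanDecomposition.negPart)
        ((-c).toNNReal • s.toJordanDecomposition.posPart) ?_ hf]
    · rw [integral_smul_nnreal_measure, integral_smul_nnreal_measure, sInt,
        NNReal.smul_def, NNReal.smul_def, Real.coe_toNNReal (-c) (by linarith),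
        Complex.real_smul, Complex.real_smul]
      push_cast
      ring
    · intro A hA
      rw [VectorMeasure.smul_apply, apply_eq s hA, Measure.smul_apply, Measure.smul_apply,
        toReal_nnreal_smul _ _ (measure_ne_top _ _), toReal_nnreal_smul _ _ (measure_ne_top _ _),
        Real.coe_toNNReal (-c) (by linarith), smul_eq_mul]
      ring

lemma norm_sInt_le (s : SignedMeasure α) {f : α → ℂ} (hb : ∀ x, ‖f x‖ ≤ 1)
    (hf : ∀ μ : Measure α, IsFiniteMeasure μ → Integrable f μ) :
    ‖sInt s f‖ ≤ tv s := by
  have key : ∀ (μ : Measure α), IsFiniteMeasure μ → ‖∫ x, f x ∂μ‖ ≤ (μ Set.univ).toReal := by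
    intro μ hμ
    refine le_trans (norm_integral_le_integral_norm f) ?_
    have : ∫ x, ‖f x‖ ∂μ ≤ ∫ _, (1:ℝ) ∂μ :=
      integral_mono (hf μ hμ).norm (integrable_const 1) hb
    simp at this; exact this
  have h1 := key _ (inferInstance : IsFiniteMeasure s.toJordanDecomposition.posPart)
  have h2 := key _ (inferInstance : IsFiniteMeasure s.toJordanDecomposition.negPart)
  rw [tv_eq]
  calc ‖sInt s f‖ ≤ ‖∫ x, f x ∂s.toJordanDecomposition.posPart‖ +
      ‖∫ x, f x ∂s.toJordanDecomposition.negPart‖ := norm_sub_le _ _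
    _ ≤ _ := by linarith

end Bal
end AuxBal3

noncomputable section AuxBal4
namespace Bal

open MeasureTheory

variable {α : Type*} [MeasurableSpace α] {d : ℕ}

lemma sInt_zero (f : α → ℂ) : sInt (0 : SignedMeasure α) f = 0 := by
  rw [sInt, SignedMeasure.toJordanDecomposition_zero]
  simp

lemma norm_negChar (x γ : Rd d) : ‖negChar x γ‖ = 1 := by
  have h : -(2 * (Real.pi : ℂ) * Complex.I) * ((⟪x, γ⟫ : ℝ) : ℂ) =
      ((-(2 * Real.pi * (⟪x, γ⟫ : ℝ)) : ℝ) : ℂ) * Complex.I := by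
    push_cast
    ring
  rw [negChar, h, Complex.norm_exp_ofReal_mul_I]

lemma continuous_negChar (γ : Rd d) : Continuous fun x => negChar x γ := by
  apply Complex.continuous_exp.comp
  exact continuous_const.mul (Complex.continuous_ofReal.comp
    (continuous_id.inner continuous_const))

lemma integrable_negChar (γ : Rd d) :
    ∀ p : Measure (Rd d), IsFiniteMeasure p → Integrable (fun x => negChar x γ) p := by
  intro p hp
  haveI := hp
  refine ⟨(continuous_negChar γ).aestronglyMeasurable, ?_⟩
  exact HasFiniteIntegral.of_bounded (C := 1)
    (Filter.Eventually.of_forall fun x => le_of_eq (norm_negChar x γ))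

lemma mInt_eq_sInt (μ : ComplexMeasure (Rd d)) (f : Rd d → ℂ) :
    mInt μ f = sInt (ComplexMeasure.re μ) f + Complex.I * sInt (ComplexMeasure.im μ) f := rfl

lemma mFourier_eq (μ : ComplexMeasure (Rd d)) (γ : Rd d) :
    mFourier μ γ = sInt (ComplexMeasure.re μ) (fun x => negChar x γ) +
      Complex.I * sInt (ComplexMeasure.im μ) (fun x => negChar x γ) := rfl

lemma mFourier_add (μ ν : ComplexMeasure (Rd d)) (γ : Rd d) :
    mFourier (μ + ν) γ = mFourier μ γ + mFourier ν γ := by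
  rw [mFourier_eq, mFourier_eq, mFourier_eq,
    (map_add ComplexMeasure.re μ ν : ComplexMeasure.re (μ + ν) = _),
    (map_add ComplexMeasure.im μ ν : ComplexMeasure.im (μ + ν) = _),
    sInt_add _ _ (integrable_negChar γ), sInt_add _ _ (integrable_negChar γ)]
  ring

lemma mFourier_smul (c : ℝ) (μ : ComplexMeasure (Rd d)) (γ : Rd d) :
    mFourier (c • μ) γ = (c : ℂ) * mFourier μ γ := by
  rw [mFourier_eq, mFourier_eq,
    (map_smul ComplexMeasure.re c μ : ComplexMeasure.re (c • μ) = _),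
    (map_smul ComplexMeasure.im c μ : ComplexMeasure.im (c • μ) = _),
    sInt_smul _ _ (integrable_negChar γ), sInt_smul _ _ (integrable_negChar γ)]
  ring

lemma mFourier_zero (γ : Rd d) : mFourier (0 : ComplexMeasure (Rd d)) γ = 0 := by
  rw [mFourier_eq, map_zero, map_zero, sInt_zero]
  ring

lemma mFourier_sub (μ ν : ComplexMeasure (Rd d)) (γ : Rd d) :
    mFourier (μ - ν) γ = mFourier μ γ - mFourier ν γ := by
  have h : μ - ν = μ + (-1 : ℝ) • ν := by
    rw [neg_one_smul, sub_eq_add_neg]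
  rw [h, mFourier_add, mFourier_smul]
  push_cast
  ring

lemma norm_mFourier_le (μ : ComplexMeasure (Rd d)) (γ : Rd d) :
    ‖mFourier μ γ‖ ≤ ‖μ‖ := by
  rw [mFourier_eq, norm_def, cnorm]
  have h1 := norm_sInt_le (ComplexMeasure.re μ) (fun x => norm_negChar x γ ▸ le_rfl)
    (integrable_negChar γ)
  have h2 := norm_sInt_le (ComplexMeasure.im μ) (fun x => norm_negChar x γ ▸ le_rfl)
    (integrable_negChar γ)
  calc ‖sInt (ComplexMeasure.re μ) (fun x => negChar x γ) +
        Complex.I * sInt (ComplexMeasure.im μ) (fun x => negChar x γ)‖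
      ≤ ‖sInt (ComplexMeasure.re μ) (fun x => negChar x γ)‖ +
        ‖Complex.I * sInt (ComplexMeasure.im μ) (fun x => negChar x γ)‖ := norm_add_le _ _
    _ = ‖sInt (ComplexMeasure.re μ) (fun x => negChar x γ)‖ +
        ‖sInt (ComplexMeasure.im μ) (fun x => negChar x γ)‖ := by
        rw [norm_mul, Complex.norm_I, one_mul]
    _ ≤ _ := add_le_add h1 h2

lemma tv_univ_ne_top (s : SignedMeasure α) : s.totalVariation Set.univ ≠ ⊤ := by
  rw [SignedMeasure.totalVariation, Measure.add_apply]
  exact ENNReal.add_ne_top.2 ⟨measure_ne_top _ _, measure_ne_top _ _⟩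

lemma tvNorm_eq (μ : ComplexMeasure (Rd d)) : tvNorm μ = ‖μ‖ := by
  rw [tvNorm, norm_def, cnorm, tv, tv,
    ENNReal.toReal_add (tv_univ_ne_top _) (tv_univ_ne_top _)]

/-- Measures supported in `E`, as a submodule. -/
def SE (E : Set (Rd d)) : Submodule ℝ (ComplexMeasure (Rd d)) where
  carrier := {ν | suppIn ν E}
  add_mem' := fun {a b} ha hb s hs hse => by
    rw [VectorMeasure.add_apply, ha s hs hse, hb s hs hse, add_zero]
  zero_mem' := fun s _ _ => rfl
  smul_mem' := fun c ν hν s hs hse => by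
    rw [VectorMeasure.smul_apply, hν s hs hse, smul_zero]

/-- Measures whose Fourier transform vanishes on `Λ`, as a submodule. -/
def WLam (Λ : Set (Rd d)) : Submodule ℝ (ComplexMeasure (Rd d)) where
  carrier := {μ | ∀ γ ∈ Λ, mFourier μ γ = 0}
  add_mem' := fun {a b} ha hb γ hγ => by
    rw [mFourier_add, ha γ hγ, hb γ hγ, add_zero]
  zero_mem' := fun γ _ => mFourier_zero γ
  smul_mem' := fun c μ hμ γ hγ => by
    rw [mFourier_smul, hμ γ hγ, mul_zero]

/-- Evaluation at a measurable set, as a continuous linear map. -/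
def evalCLM {s : Set (Rd d)} (hs : MeasurableSet s) :
    ComplexMeasure (Rd d) →L[ℝ] ℂ :=
  LinearMap.mkContinuous
    { toFun := fun μ => μ s
      map_add' := fun μ ν => rfl
      map_smul' := fun c μ => rfl } 1
    (fun μ => by rw [one_mul]; exact norm_apply_le' μ hs)

lemma evalCLM_apply {s : Set (Rd d)} (hs : MeasurableSet s) (μ : ComplexMeasure (Rd d)) :
    evalCLM hs μ = μ s := rfl

/-- Fourier evaluation at a frequency, as a continuous linear map. -/
def fourierCLM (γ : Rd d) : ComplexMeasure (Rd d) →L[ℝ] ℂ :=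
  LinearMap.mkContinuous
    { toFun := fun μ => mFourier μ γ
      map_add' := fun μ ν => mFourier_add μ ν γ
      map_smul' := fun c μ => by
        show mFourier (c • μ) γ = (RingHom.id ℝ) c • mFourier μ γ
        rw [mFourier_smul, RingHom.id_apply, Complex.real_smul] } 1
    (fun μ => by rw [one_mul]; exact norm_mFourier_le μ γ)

lemma fourierCLM_apply (γ : Rd d) (μ : ComplexMeasure (Rd d)) :
    fourierCLM γ μ = mFourier μ γ := rfl

lemma isClosed_SE (E : Set (Rd d)) :
    IsClosed ((SE E : Submodule ℝ (ComplexMeasure (Rd d))) : Set (ComplexMeasure (Rd d))) := by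
  have h : ((SE E : Submodule ℝ (ComplexMeasure (Rd d))) : Set (ComplexMeasure (Rd d))) =
      ⋂ s : Set (Rd d), {ν : ComplexMeasure (Rd d) | MeasurableSet s → s ∩ E = ∅ → ν s = 0} := by
    ext ν
    simp only [Set.mem_iInter, Set.mem_setOf_eq, SetLike.mem_coe]
    exact ⟨fun h s hs hse => h s hs hse, fun h s hs hse => h s hs hse⟩
  rw [h]
  refine isClosed_iInter fun s => ?_
  by_cases hs : MeasurableSet s ∧ s ∩ E = ∅
  · have h2 : {ν : ComplexMeasure (Rd d) | MeasurableSet s → s ∩ E = ∅ → ν s = 0} =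
        (evalCLM hs.1) ⁻¹' {0} := by
      ext ν
      simp [evalCLM_apply hs.1, hs.1, hs.2]
    rw [h2]
    exact isClosed_singleton.preimage (evalCLM hs.1).continuous
  · have h2 : {ν : ComplexMeasure (Rd d) | MeasurableSet s → s ∩ E = ∅ → ν s = 0} =
        Set.univ := by
      ext ν
      simp only [Set.mem_setOf_eq, Set.mem_univ, iff_true]
      intro h1 h2
      exact absurd ⟨h1, h2⟩ hs
    rw [h2]
    exact isClosed_univ

lemma isClosed_WLam (Λ : Set (Rd d)) :
    IsClosed ((WLam Λ : Submodule ℝ (ComplexMeasure (Rd d))) : Set (ComplexMeasure (Rd d))) := by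
  have h : ((WLam Λ : Submodule ℝ (ComplexMeasure (Rd d))) : Set (ComplexMeasure (Rd d))) =
      ⋂ γ : Rd d, {μ : ComplexMeasure (Rd d) | γ ∈ Λ → mFourier μ γ = 0} := by
    ext μ
    simp only [Set.mem_iInter, Set.mem_setOf_eq, SetLike.mem_coe]
    exact ⟨fun h γ hγ => h γ hγ, fun h γ hγ => h γ hγ⟩
  rw [h]
  refine isClosed_iInter fun γ => ?_
  by_cases hγ : γ ∈ Λ
  · have h2 : {μ : ComplexMeasure (Rd d) | γ ∈ Λ → mFourier μ γ = 0} =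
        (fourierCLM γ) ⁻¹' {0} := by
      ext μ
      simp [fourierCLM_apply, hγ]
    rw [h2]
    exact isClosed_singleton.preimage (fourierCLM γ).continuous
  · have h2 : {μ : ComplexMeasure (Rd d) | γ ∈ Λ → mFourier μ γ = 0} = Set.univ := by
      ext μ
      simp [hγ]
    rw [h2]
    exact isClosed_univ

end Bal
end AuxBal4

/-- If balayage is possible for `(E, Λ)` with `E` closed and `Λ` compact, then there is `K > 0`
such that for every bounded measure `μ`, the infimum of the total variation norms of measures
`ν` supported in `E` with `ν̂ = μ̂` on `Λ` is at most `K ‖μ‖₁`. -/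
theorem stmt1 {d : ℕ} (E Λ : Set (Rd d)) (hE : IsClosed E) (hΛ : IsCompact Λ)
    (hbal : BalayagePossible E Λ) :
    ∃ K > (0 : ℝ), ∀ μ : ComplexMeasure (Rd d),
      sInf {r : ℝ | ∃ ν : ComplexMeasure (Rd d),
          suppIn ν E ∧ (∀ γ ∈ Λ, mFourier ν γ = mFourier μ γ) ∧ r = tvNorm ν}
        ≤ K * tvNorm μ := by
  classical
  haveI hWc : IsClosed ((Bal.WLam Λ : Submodule ℝ (ComplexMeasure (Rd d))) :
      Set (ComplexMeasure (Rd d))) := Bal.isClosed_WLam Λ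
  haveI hSc : CompleteSpace (Bal.SE E : Submodule ℝ (ComplexMeasure (Rd d))) :=
    (Bal.isClosed_SE E).completeSpace_coe
  set W : Submodule ℝ (ComplexMeasure (Rd d)) := Bal.WLam Λ with hW
  let T : (Bal.SE E : Submodule ℝ (ComplexMeasure (Rd d))) →L[ℝ] (ComplexMeasure (Rd d) ⧸ W) :=
    LinearMap.mkContinuous (W.mkQ.comp (Bal.SE E).subtype) 1 (fun ν => by
      rw [one_mul]
      exact Submodule.Quotient.norm_mk_le W ν.1)
  have hT_apply : ∀ ν : (Bal.SE E : Submodule ℝ (ComplexMeasure (Rd d))),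
      T ν = Submodule.Quotient.mk (ν : ComplexMeasure (Rd d)) := fun ν => rfl
  have hsurj : Function.Surjective T := by
    intro q
    obtain ⟨μ, rfl⟩ := Submodule.Quotient.mk_surjective W q
    obtain ⟨ν, hνE, hνF⟩ := hbal μ
    refine ⟨⟨ν, hνE⟩, ?_⟩
    rw [hT_apply, Submodule.Quotient.eq]
    intro γ hγ
    rw [Bal.mFourier_sub, hνF γ hγ, sub_self]
  obtain ⟨C, hC0, hC⟩ := T.exists_preimage_norm_le hsurj
  refine ⟨C, hC0, fun μ => ?_⟩
  obtain ⟨x, hTx, hx⟩ := hC (Submodule.Quotient.mk μ)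
  rw [hT_apply] at hTx
  have hmem : (x : ComplexMeasure (Rd d)) - μ ∈ W := (Submodule.Quotient.eq W).1 hTx
  have hfour : ∀ γ ∈ Λ, mFourier (x : ComplexMeasure (Rd d)) γ = mFourier μ γ := by
    intro γ hγ
    have h0 := hmem γ hγ
    rw [Bal.mFourier_sub] at h0
    exact sub_eq_zero.1 h0
  have hbdd : BddBelow {r : ℝ | ∃ ν : ComplexMeasure (Rd d),
      suppIn ν E ∧ (∀ γ ∈ Λ, mFourier ν γ = mFourier μ γ) ∧ r = tvNorm ν} := by
    refine ⟨0, fun r hr => ?_⟩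
    obtain ⟨ν, -, -, rfl⟩ := hr
    rw [Bal.tvNorm_eq]
    exact norm_nonneg _
  have hmemS : tvNorm (x : ComplexMeasure (Rd d)) ∈ {r : ℝ | ∃ ν : ComplexMeasure (Rd d),
      suppIn ν E ∧ (∀ γ ∈ Λ, mFourier ν γ = mFourier μ γ) ∧ r = tvNorm ν} :=
    ⟨(x : ComplexMeasure (Rd d)), x.2, hfour, rfl⟩
  refine le_trans (csInf_le hbdd hmemS) ?_
  rw [Bal.tvNorm_eq, Bal.tvNorm_eq]
  calc ‖(x : ComplexMeasure (Rd d))‖ = ‖x‖ := rfl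
    _ ≤ C * ‖(Submodule.Quotient.mk μ : ComplexMeasure (Rd d) ⧸ W)‖ := hx
    _ ≤ C * ‖μ‖ := mul_le_mul_of_nonneg_left (Submodule.Quotient.norm_mk_le W μ) hC0.le
end

section
/- Assume Λ ⊆ ℝ̂^d is a compact S-set of strict multiplicity and balayage is possible for (E, Λ), where E ⊆ ℝ^d is closed. If f ∈ C_b(ℝ^d) has supp f̂ ⊆ Λ and f vanishes on E, then f is identically zero. -/
open MeasureTheory Complex Filter Topology FourierTransform RealInnerProductSpace ENNReal NNReal

noncomputable section

namespace Aux

variable {d : ℕ}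

def sInt (s : SignedMeasure (Rd d)) (f : Rd d → ℂ) : ℂ :=
  (∫ x, f x ∂s.toJordanDecomposition.posPart) - ∫ x, f x ∂s.toJordanDecomposition.negPart

lemma integrable_bdd {f : Rd d → ℂ} (hc : Continuous f) {M : ℝ} (hM : ∀ x, ‖f x‖ ≤ M)
    (m : Measure (Rd d)) [IsFiniteMeasure m] : Integrable f m :=
  Integrable.mono' (integrable_const M) hc.aestronglyMeasurable (Filter.Eventually.of_forall hM)

lemma jordan_measure_eq (s t : SignedMeasure (Rd d)) :
    (s - t).toJordanDecomposition.posPart + s.toJordanDecomposition.negPart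
      + t.toJordanDecomposition.posPart
    = (s - t).toJordanDecomposition.negPart + s.toJordanDecomposition.posPart
      + t.toJordanDecomposition.negPart := by
  rw [← Measure.toSignedMeasure_eq_toSignedMeasure_iff]
  have h1 := (s - t).toSignedMeasure_toJordanDecomposition
  have h2 := s.toSignedMeasure_toJordanDecomposition
  have h3 := t.toSignedMeasure_toJordanDecomposition
  rw [JordanDecomposition.toSignedMeasure] at h1 h2 h3
  rw [Measure.toSignedMeasure_add, Measure.toSignedMeasure_add,
    Measure.toSignedMeasure_add, Measure.toSignedMeasure_add,
    sub_eq_iff_eq_add.mp h1, sub_eq_iff_eq_add.mp h2, sub_eq_iff_eq_add.mp h3]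
  abel

lemma sInt_sub (s t : SignedMeasure (Rd d)) {f : Rd d → ℂ} (hc : Continuous f) {M : ℝ}
    (hM : ∀ x, ‖f x‖ ≤ M) : sInt (s - t) f = sInt s f - sInt t f := by
  have key := jordan_measure_eq s t
  have hint : ∫ x, f x ∂((s - t).toJordanDecomposition.posPart
      + s.toJordanDecomposition.negPart + t.toJordanDecomposition.posPart)
    = ∫ x, f x ∂((s - t).toJordanDecomposition.negPart
      + s.toJordanDecomposition.posPart + t.toJordanDecomposition.negPart) := by rw [key]
  rw [integral_add_measure, integral_add_measure, integral_add_measure, integral_add_measure]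
    at hint
  · unfold sInt; linear_combination hint
  all_goals first
    | exact integrable_bdd hc hM _
    | exact (integrable_bdd hc hM _).add_measure (integrable_bdd hc hM _)

lemma sInt_toSM (m : Measure (Rd d)) [IsFiniteMeasure m] {f : Rd d → ℂ} (hc : Continuous f)
    {M : ℝ} (hM : ∀ x, ‖f x‖ ≤ M) : sInt m.toSignedMeasure f = ∫ x, f x ∂m := by
  have h1 := m.toSignedMeasure.toSignedMeasure_toJordanDecomposition
  rw [JordanDecomposition.toSignedMeasure] at h1
  have hpos : m.toSignedMeasure.toJordanDecomposition.posPart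
      = m + m.toSignedMeasure.toJordanDecomposition.negPart := by
    rw [← Measure.toSignedMeasure_eq_toSignedMeasure_iff, Measure.toSignedMeasure_add]
    linear_combination (norm := abel) h1
  unfold sInt
  rw [hpos, integral_add_measure (integrable_bdd hc hM _) (integrable_bdd hc hM _)]
  ring

lemma sInt_zero {f : Rd d → ℂ} : sInt (0 : SignedMeasure (Rd d)) f = 0 := by
  unfold sInt
  rw [SignedMeasure.toJordanDecomposition_zero, JordanDecomposition.zero_posPart,
    JordanDecomposition.zero_negPart]
  simp

end Aux

namespace Aux
variable {d : ℕ}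

lemma signed_apply_parts (s : SignedMeasure (Rd d)) {i : Set (Rd d)} (hi : MeasurableSet i) :
    s i = (s.toJordanDecomposition.posPart i).toReal
      - (s.toJordanDecomposition.negPart i).toReal := by
  conv_lhs => rw [← s.toSignedMeasure_toJordanDecomposition]
  rw [JordanDecomposition.toSignedMeasure, VectorMeasure.sub_apply,
    Measure.toSignedMeasure_apply_measurable hi, Measure.toSignedMeasure_apply_measurable hi]
  rfl

lemma parts_compl_zero (s : SignedMeasure (Rd d)) {E : Set (Rd d)} (hE : IsClosed E)
    (hs : ∀ i : Set (Rd d), MeasurableSet i → i ∩ E = ∅ → s i = 0) :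
    s.toJordanDecomposition.posPart Eᶜ = 0 ∧ s.toJordanDecomposition.negPart Eᶜ = 0 := by
  obtain ⟨A, hA, hposA, hnegAc⟩ := s.toJordanDecomposition.mutuallySingular
  set pos := s.toJordanDecomposition.posPart
  set neg := s.toJordanDecomposition.negPart
  have hEm : MeasurableSet Eᶜ := hE.measurableSet.compl
  have hdisj : ∀ B : Set (Rd d), B ⊆ Eᶜ → B ∩ E = ∅ := by
    intro B hB; rw [Set.eq_empty_iff_forall_notMem]
    rintro x ⟨hx1, hx2⟩; exact hB hx1 hx2
  have hposc : pos (Eᶜ ∩ Aᶜ) = 0 := by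
    have hmeas : MeasurableSet (Eᶜ ∩ Aᶜ) := hEm.inter hA.compl
    have hnz : neg (Eᶜ ∩ Aᶜ) = 0 :=
      le_antisymm (le_trans (measure_mono Set.inter_subset_right) hnegAc.le) (zero_le)
    have := hs _ hmeas (hdisj _ Set.inter_subset_left)
    rw [signed_apply_parts s hmeas, hnz] at this
    simp only [ENNReal.toReal_zero, sub_zero] at this
    exact (ENNReal.toReal_eq_zero_iff _).mp this |>.resolve_right (measure_ne_top _ _)
  have hnegc : neg (Eᶜ ∩ A) = 0 := by
    have hmeas : MeasurableSet (Eᶜ ∩ A) := hEm.inter hA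
    have hpz : pos (Eᶜ ∩ A) = 0 :=
      le_antisymm (le_trans (measure_mono Set.inter_subset_right) hposA.le) (zero_le)
    have := hs _ hmeas (hdisj _ Set.inter_subset_left)
    rw [signed_apply_parts s hmeas, hpz] at this
    simp only [ENNReal.toReal_zero, zero_sub, neg_eq_zero] at this
    exact (ENNReal.toReal_eq_zero_iff _).mp this |>.resolve_right (measure_ne_top _ _)
  constructor
  · have : pos Eᶜ ≤ pos (Eᶜ ∩ A) + pos (Eᶜ ∩ Aᶜ) := by
      have h := measure_union_le (μ := pos) (Eᶜ ∩ A) (Eᶜ ∩ Aᶜ)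
      rwa [Set.inter_union_compl] at h
    have hpz : pos (Eᶜ ∩ A) = 0 :=
      le_antisymm (le_trans (measure_mono Set.inter_subset_right) hposA.le) (zero_le)
    simpa [hpz, hposc] using this
  · have : neg Eᶜ ≤ neg (Eᶜ ∩ A) + neg (Eᶜ ∩ Aᶜ) := by
      have h := measure_union_le (μ := neg) (Eᶜ ∩ A) (Eᶜ ∩ Aᶜ)
      rwa [Set.inter_union_compl] at h
    have hnz : neg (Eᶜ ∩ Aᶜ) = 0 :=
      le_antisymm (le_trans (measure_mono Set.inter_subset_right) hnegAc.le) (zero_le)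
    simpa [hnegc, hnz] using this

lemma integral_zero_of_vanish {m : Measure (Rd d)} {E : Set (Rd d)} (hm : m Eᶜ = 0)
    {f : Rd d → ℂ} (hfE : ∀ x ∈ E, f x = 0) : ∫ x, f x ∂m = 0 := by
  have : f =ᵐ[m] 0 := by
    rw [Filter.EventuallyEq, ae_iff]
    refine measure_mono_null ?_ hm
    intro x hx
    simp only [Set.mem_setOf_eq, Pi.zero_apply] at hx
    intro hxE; exact hx (hfE x hxE)
  rw [integral_congr_ae this]; simp

end Aux


namespace Aux
variable {d : ℕ}

lemma mInt_eq (μ : ComplexMeasure (Rd d)) (f : Rd d → ℂ) :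
    mInt μ f = sInt (ComplexMeasure.re μ) f + Complex.I * sInt (ComplexMeasure.im μ) f := rfl

lemma mInt_sub (c1 c2 : ComplexMeasure (Rd d)) {f : Rd d → ℂ} (hc : Continuous f) {M : ℝ}
    (hM : ∀ x, ‖f x‖ ≤ M) : mInt (c1 - c2) f = mInt c1 f - mInt c2 f := by
  have hre : ComplexMeasure.re (c1 - c2) = ComplexMeasure.re c1 - ComplexMeasure.re c2 :=
    map_sub _ _ _
  have him : ComplexMeasure.im (c1 - c2) = ComplexMeasure.im c1 - ComplexMeasure.im c2 :=
    map_sub _ _ _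
  rw [mInt_eq, mInt_eq, mInt_eq, hre, him, sInt_sub _ _ hc hM, sInt_sub _ _ hc hM]
  ring

lemma mInt_zero_of_supp {ν : ComplexMeasure (Rd d)} {E : Set (Rd d)} (hE : IsClosed E)
    (hν : suppIn ν E) {f : Rd d → ℂ} (hfE : ∀ x ∈ E, f x = 0) : mInt ν f = 0 := by
  have hre : ∀ i : Set (Rd d), MeasurableSet i → i ∩ E = ∅ → (ComplexMeasure.re ν) i = 0 := by
    intro i hi hiE
    have h : (ComplexMeasure.re ν) i = (ν i).re := rfl
    rw [h, hν i hi hiE]; rfl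
  have him : ∀ i : Set (Rd d), MeasurableSet i → i ∩ E = ∅ → (ComplexMeasure.im ν) i = 0 := by
    intro i hi hiE
    have h : (ComplexMeasure.im ν) i = (ν i).im := rfl
    rw [h, hν i hi hiE]; rfl
  obtain ⟨h1, h2⟩ := parts_compl_zero (ComplexMeasure.re ν) hE hre
  obtain ⟨h3, h4⟩ := parts_compl_zero (ComplexMeasure.im ν) hE him
  rw [mInt_eq]
  unfold sInt
  rw [integral_zero_of_vanish h1 hfE, integral_zero_of_vanish h2 hfE,
    integral_zero_of_vanish h3 hfE, integral_zero_of_vanish h4 hfE]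
  ring

lemma negChar_continuous (γ : Rd d) : Continuous fun x => negChar x γ := by
  unfold negChar
  exact Complex.continuous_exp.comp <| continuous_const.mul <|
    Complex.continuous_ofReal.comp (continuous_id.inner continuous_const)

lemma negChar_norm (x γ : Rd d) : ‖negChar x γ‖ ≤ 1 := by
  unfold negChar
  rw [Complex.norm_exp]
  simp [Complex.mul_re]

lemma mInt_dirac (x₀ : Rd d) {g : Rd d → ℂ} (hc : Continuous g) {M : ℝ}
    (hM : ∀ x, ‖g x‖ ≤ M) :
    mInt ((Measure.dirac x₀).toSignedMeasure.toComplexMeasure 0) g = g x₀ := by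
  rw [mInt_eq, SignedMeasure.re_toComplexMeasure, SignedMeasure.im_toComplexMeasure,
    sInt_toSM _ hc hM, sInt_zero, integral_dirac]
  ring

end Aux

end

/-- If `Λ` is a compact S-set of strict multiplicity, `E` is closed, balayage is possible for
`(E, Λ)`, `f ∈ C_b(ℝ^d)` has `supp f̂ ⊆ Λ`, and `f` vanishes on `E`, then `f ≡ 0`. -/
theorem stmt4 {d : ℕ} (E Λ : Set (Rd d)) (hE : IsClosed E) (hΛ : IsCompact Λ)
    (hsyn : IsSSet Λ) (hmult : StrictMultiplicity Λ) (hbal : BalayagePossible E Λ)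
    (f : Rd d → ℂ) (hf : MemCLam f Λ) (hfE : ∀ x ∈ E, f x = 0) :
    ∀ x : Rd d, f x = 0 := by
  intro x₀
  have hcf := hf.1
  obtain ⟨M, hMf⟩ := hf.2.1
  set δ : ComplexMeasure (Rd d) := (Measure.dirac x₀).toSignedMeasure.toComplexMeasure 0 with hδdef
  obtain ⟨ν, hνE, hνF⟩ := hbal δ
  have hF0 : ∀ γ ∈ Λ, mFourier (δ - ν) γ = 0 := by
    intro γ hγ
    have : mFourier (δ - ν) γ = mInt (δ - ν) (fun x => negChar x γ) := rfl
    rw [this, Aux.mInt_sub _ _ (Aux.negChar_continuous γ) (fun x => Aux.negChar_norm x γ)]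
    exact sub_eq_zero.mpr (hνF γ hγ).symm
  have h0 := hsyn f hf (δ - ν) hF0
  rw [Aux.mInt_sub _ _ hcf hMf] at h0
  have hδf : mInt δ f = f x₀ := Aux.mInt_dirac x₀ hcf hMf
  have hνf : mInt ν f = 0 := Aux.mInt_zero_of_supp hE hνE hfE
  rw [hδf, hνf, sub_zero] at h0
  exact h0
end
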